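/- Any function h : [a,b] → ℝ satisfying D⁺h(s) ≤ f⁺(s,h(s)) + ξ and D⁻h(s) ≥ f⁻(s,h(s)) − ξ for all s ∈ [a,b), where |f^±| ≤ B on the relevant region and h is continuous with B_l ≤ h ≤ B_u, is (B+ξ)-Lipschitz on [a,b]. -/

import Mathlib

open Filter Set

noncomputable def DiniUpper (h : ℝ → ℝ) (s : ℝ) : EReal :=
  Filter.limsup (fun s' => (((h s' - h s) / (s' - s) : ℝ) : EReal)) (nhdsWithin s (Set.Ioi s))

noncomputable def DiniLower (h : ℝ → ℝ) (s : ℝ) : EReal :=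
  Filter.liminf (fun s' => (((h s' - h s) / (s' - s) : ℝ) : EReal)) (nhdsWithin s (Set.Ioi s))

lemma key_lip {a b C : ℝ} {h : ℝ → ℝ} (hcont : ContinuousOn h (Set.Icc a b))
    (hbd : ∀ x ∈ Set.Ico a b, ∀ r, C < r → ∃ᶠ z in nhdsWithin x (Set.Ioi x), slope h x z < r) :
    ∀ s ∈ Set.Icc a b, ∀ t ∈ Set.Icc a b, s ≤ t → h t - h s ≤ C * (t - s) := by
  intro s hs t ht hst
  have hsub : Set.Icc s t ⊆ Set.Icc a b := Set.Icc_subset_Icc hs.1 ht.2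
  have := image_le_of_liminf_slope_right_le_deriv_boundary
    (f := h) (a := s) (b := t) (hcont.mono hsub)
    (B := fun x => h s + C * (x - s)) (B' := fun _ => C)
    (by simp) (by fun_prop)
    (fun x _ => by
      simpa using (((hasDerivWithinAt_id x (Set.Ici x)).sub_const s).const_mul C).const_add (h s))
    (fun x hx r hr => hbd x ⟨le_trans hs.1 hx.1, lt_of_lt_of_le hx.2 ht.2⟩ r hr)
  have := this (Set.right_mem_Icc.2 hst)
  linarith

theorem stmt_12 (a b B ξ : ℝ) (hab : a < b) (hB : 0 < B) (hξ : 0 ≤ ξ)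
    (Bl Bu : ℝ → ℝ) (fm fp : ℝ → ℝ → ℝ)
    (hbd : ∀ s ∈ Set.Icc a b, ∀ y ∈ Set.Icc (Bl s) (Bu s), |fm s y| ≤ B ∧ |fp s y| ≤ B)
    (h : ℝ → ℝ) (hcont : ContinuousOn h (Set.Icc a b))
    (hbounds : ∀ s ∈ Set.Icc a b, Bl s ≤ h s ∧ h s ≤ Bu s)
    (hdini : ∀ s ∈ Set.Ico a b,
      ((fm s (h s) - ξ : ℝ) : EReal) ≤ DiniLower h s ∧
      DiniUpper h s ≤ ((fp s (h s) + ξ : ℝ) : EReal)) :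
    ∀ s ∈ Set.Icc a b, ∀ t ∈ Set.Icc a b, |h s - h t| ≤ (B + ξ) * |s - t| := by
  set C := B + ξ with hC
  -- bounds on f at points of the curve
  have hfb : ∀ x ∈ Set.Ico a b, |fm x (h x)| ≤ B ∧ |fp x (h x)| ≤ B := by
    intro x hx
    have hx' : x ∈ Set.Icc a b := Set.Ico_subset_Icc_self hx
    exact hbd x hx' (h x) ⟨(hbounds x hx').1, (hbounds x hx').2⟩
  -- upper estimate
  have hup : ∀ s ∈ Set.Icc a b, ∀ t ∈ Set.Icc a b, s ≤ t → h t - h s ≤ C * (t - s) := by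
    apply key_lip hcont
    intro x hx r hr
    have h1 : DiniUpper h x ≤ ((C : ℝ) : EReal) := by
      refine le_trans (hdini x hx).2 ?_
      rw [EReal.coe_le_coe_iff]
      have := (abs_le.1 (hfb x hx).2).2
      simp [hC]; linarith
    have h2 : DiniUpper h x < ((r : ℝ) : EReal) :=
      lt_of_le_of_lt h1 (by exact_mod_cast hr)
    have h3 : ∀ᶠ z in nhdsWithin x (Set.Ioi x),
        (((h z - h x) / (z - x) : ℝ) : EReal) < ((r : ℝ) : EReal) :=
      Filter.eventually_lt_of_limsup_lt h2
    refine (h3.mono ?_).frequently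
    intro z hz
    rw [slope_def_field]
    exact_mod_cast hz
  -- lower estimate via -h
  have hdn : ∀ s ∈ Set.Icc a b, ∀ t ∈ Set.Icc a b, s ≤ t →
      (fun x => -h x) t - (fun x => -h x) s ≤ C * (t - s) := by
    apply key_lip hcont.neg
    intro x hx r hr
    have h1 : ((-C : ℝ) : EReal) ≤ DiniLower h x := by
      refine le_trans ?_ (hdini x hx).1
      rw [EReal.coe_le_coe_iff]
      have := (abs_le.1 (hfb x hx).1).1
      simp [hC]; linarith
    have h2 : ((-r : ℝ) : EReal) < DiniLower h x :=
      lt_of_lt_of_le (by exact_mod_cast neg_lt_neg hr) h1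
    have h3 : ∀ᶠ z in nhdsWithin x (Set.Ioi x),
        ((-r : ℝ) : EReal) < (((h z - h x) / (z - x) : ℝ) : EReal) :=
      Filter.eventually_lt_of_lt_liminf h2
    refine (h3.mono ?_).frequently
    intro z hz
    have hz' : -r < (h z - h x) / (z - x) := by exact_mod_cast hz
    rw [slope_def_field]
    have : (-h z - -h x) / (z - x) = -((h z - h x) / (z - x)) := by ring
    rw [Pi.neg_apply, Pi.neg_apply, this]
    linarith
  -- combine
  have main : ∀ s ∈ Set.Icc a b, ∀ t ∈ Set.Icc a b, s ≤ t → |h s - h t| ≤ C * |s - t| := by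
    intro s hs t ht hst
    have h1 := hup s hs t ht hst
    have h2 := hdn s hs t ht hst
    simp only at h2
    rw [abs_sub_comm, abs_sub_comm s t, abs_of_nonneg (sub_nonneg.2 hst)]
    rw [abs_le]
    constructor <;> linarith
  intro s hs t ht
  rcases le_total s t with hst | hts
  · exact main s hs t ht hst
  · rw [abs_sub_comm, abs_sub_comm s t]
    exact main t ht s hs hts
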